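/- Let G be a finite bipartite simple graph with bipartition classes U = {u₁, …, u_m} and V = {v₁, …, vₙ}, equipped with an orientation of its edges in which every vertex has indegree at most k, and let q : V(G) → ℝ be any function. Assign variables x₁, …, x_m to the vertices of U and y₁, …, yₙ to the vertices of V, and for a vertex w let S(w) denote the formal sum of the variables assigned to the neighbors of w. Then the polynomial P = ∏_{uᵢvⱼ ∈ E(G)} ( q(uᵢ) + S(uᵢ) − q(vⱼ) − S(vⱼ) ) over ℝ has total degree equal to the number of edges of G, and P contains a monomial with nonzero coefficient in which every variable occurs with exponent at most k. -/

import Mathlib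

open MvPolynomial

/-- The graph polynomial of a bipartite graph with classes `Fin m` (variables `xᵢ`,
encoded as `X (Sum.inl i)`) and `Fin n` (variables `yⱼ`, encoded as `X (Sum.inr j)`)
and edge set `E`:  `P = ∏_{(i,j) ∈ E} ( q(uᵢ) + S(uᵢ) − q(vⱼ) − S(vⱼ) )`,
where `S(w)` is the formal sum of the variables assigned to the neighbors of `w`. -/
noncomputable def bipPoly (m n : ℕ) (E : Finset (Fin m × Fin n))
    (qu : Fin m → ℝ) (qv : Fin n → ℝ) : MvPolynomial (Fin m ⊕ Fin n) ℝ :=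
  ∏ e ∈ E,
    (C (qu e.1) + (∑ j ∈ Finset.univ.filter fun j => (e.1, j) ∈ E, X (Sum.inr j))
      - C (qv e.2) - ∑ i ∈ Finset.univ.filter fun i => (i, e.2) ∈ E, X (Sum.inl i))


namespace BipAux

variable {m n : ℕ}

noncomputable def fac (m n : ℕ) (E : Finset (Fin m × Fin n)) (qu : Fin m → ℝ) (qv : Fin n → ℝ)
    (e : Fin m × Fin n) : MvPolynomial (Fin m ⊕ Fin n) ℝ :=
  C (qu e.1) + (∑ j ∈ Finset.univ.filter fun j => (e.1, j) ∈ E, X (Sum.inr j))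
    - C (qv e.2) - ∑ i ∈ Finset.univ.filter fun i => (i, e.2) ∈ E, X (Sum.inl i)

/-- total weight of an exponent vector -/
def W (d : (Fin m ⊕ Fin n) →₀ ℕ) : ℕ := ∑ w : Fin m ⊕ Fin n, d w

/-- total exponent of the x-variables -/
def A (d : (Fin m ⊕ Fin n) →₀ ℕ) : ℕ := ∑ i : Fin m, d (Sum.inl i)

lemma W_eq (d : (Fin m ⊕ Fin n) →₀ ℕ) : W d = ∑ i ∈ d.support, d i :=
  (Finsupp.sum_fintype d (fun _ k => k) (fun _ => rfl)).symm

lemma W_add (d d' : (Fin m ⊕ Fin n) →₀ ℕ) : W (d + d') = W d + W d' := by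
  simp [W, Finset.sum_add_distrib]

lemma A_add (d d' : (Fin m ⊕ Fin n) →₀ ℕ) : A (d + d') = A d + A d' := by
  simp [A, Finset.sum_add_distrib]

lemma W_single (w : Fin m ⊕ Fin n) : W (Finsupp.single w 1) = 1 := by
  simp [W, Finsupp.single_apply]

lemma A_single_inl (i : Fin m) : A (Finsupp.single (Sum.inl i : Fin m ⊕ Fin n) 1) = 1 := by
  simp [A, Finsupp.single_apply]

lemma A_single_inr (j : Fin n) : A (Finsupp.single (Sum.inr j : Fin m ⊕ Fin n) 1) = 0 := by
  simp [A, Finsupp.single_apply]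

lemma W_zero_eq (d : (Fin m ⊕ Fin n) →₀ ℕ) (h : W d = 0) : d = 0 := by
  ext w
  have := Finset.sum_eq_zero_iff.mp h w (Finset.mem_univ w)
  simpa using this

lemma totalDegree_fac (E : Finset (Fin m × Fin n)) (qu : Fin m → ℝ) (qv : Fin n → ℝ)
    (e : Fin m × Fin n) : (fac m n E qu qv e).totalDegree ≤ 1 := by
  unfold fac
  refine le_trans (totalDegree_sub _ _) (max_le ?_ ?_)
  · refine le_trans (totalDegree_sub _ _) (max_le ?_ ?_)
    · refine le_trans (totalDegree_add _ _) (max_le ?_ ?_)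
      · simp [totalDegree_C]
      · refine le_trans (totalDegree_finset_sum _ _) (Finset.sup_le fun j _ => ?_)
        simp [totalDegree_X]
    · simp [totalDegree_C]
  · refine le_trans (totalDegree_finset_sum _ _) (Finset.sup_le fun i _ => ?_)
    simp [totalDegree_X]

lemma totalDegree_prod (E t : Finset (Fin m × Fin n)) (qu : Fin m → ℝ) (qv : Fin n → ℝ) :
    (∏ e ∈ t, fac m n E qu qv e).totalDegree ≤ t.card := by
  refine le_trans (totalDegree_finset_prod _ _) ?_
  calc ∑ e ∈ t, (fac m n E qu qv e).totalDegree ≤ ∑ _e ∈ t, 1 :=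
        Finset.sum_le_sum fun e _ => totalDegree_fac E qu qv e
    _ = t.card := by simp

/-- the contribution of variable `w` to the coefficient computation -/
noncomputable def T (E t : Finset (Fin m × Fin n)) (qu : Fin m → ℝ) (qv : Fin n → ℝ)
    (d : (Fin m ⊕ Fin n) →₀ ℕ) (w : Fin m ⊕ Fin n) : ℝ :=
  (-1 : ℝ) ^ (A (Finsupp.single w 1)) * ((-1 : ℝ) ^ (A d) *
    (if w ∈ d.support then (∏ e ∈ t, fac m n E qu qv e).coeff (d - Finsupp.single w 1) else 0))

lemma coeff_insert (E : Finset (Fin m × Fin n)) (qu : Fin m → ℝ) (qv : Fin n → ℝ)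
    (e : Fin m × Fin n) (t : Finset (Fin m × Fin n)) (he : e ∉ t)
    (d : (Fin m ⊕ Fin n) →₀ ℕ) (hW : W d = t.card + 1) :
    (-1 : ℝ) ^ (A d) * (∏ e' ∈ insert e t, fac m n E qu qv e').coeff d
      = (∑ j ∈ Finset.univ.filter (fun j => (e.1, j) ∈ E), T E t qu qv d (Sum.inr j))
        + ∑ i ∈ Finset.univ.filter (fun i => (i, e.2) ∈ E), T E t qu qv d (Sum.inl i) := by
  classical
  set P' := ∏ e' ∈ t, fac m n E qu qv e' with hP'
  have hPd : P'.coeff d = 0 := by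
    apply coeff_eq_zero_of_totalDegree_lt
    rw [← W_eq, hW]
    exact lt_of_le_of_lt (totalDegree_prod E t qu qv) (Nat.lt_succ_self _)
  have hsplit : fac m n E qu qv e * P' =
      C (qu e.1 - qv e.2) * P'
        + (P' * ∑ j ∈ Finset.univ.filter (fun j => (e.1, j) ∈ E), X (Sum.inr j)
            - P' * ∑ i ∈ Finset.univ.filter (fun i => (i, e.2) ∈ E), X (Sum.inl i)) := by
    unfold fac; rw [map_sub]; ring
  rw [Finset.prod_insert he, ← hP', hsplit]
  rw [coeff_add, coeff_sub, coeff_C_mul, hPd, mul_zero, zero_add,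
    Finset.mul_sum, Finset.mul_sum, coeff_sum, coeff_sum]
  simp only [coeff_mul_X']
  rw [mul_sub, Finset.mul_sum, Finset.mul_sum, sub_eq_add_neg, ← Finset.sum_neg_distrib]
  congr 1
  · exact Finset.sum_congr rfl fun j _ => by
      simp [T, A_single_inr, ← hP']
  · exact Finset.sum_congr rfl fun i _ => by
      simp only [T, A_single_inl, pow_one, neg_one_mul, Finsupp.mem_support_iff, ne_eq, ← hP']

lemma T_nonneg_of (E t : Finset (Fin m × Fin n)) (qu : Fin m → ℝ) (qv : Fin n → ℝ)
    (d : (Fin m ⊕ Fin n) →₀ ℕ) (w : Fin m ⊕ Fin n)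
    (H : ∀ d' : (Fin m ⊕ Fin n) →₀ ℕ, W d' = t.card →
      0 ≤ (-1 : ℝ) ^ (A d') * (∏ e ∈ t, fac m n E qu qv e).coeff d')
    (hWd : W d = t.card + 1) : 0 ≤ T E t qu qv d w := by
  unfold T
  split_ifs with hw
  · have hw1 : (1 : ℕ) ≤ d w := by
      rwa [Finsupp.mem_support_iff, ← Nat.one_le_iff_ne_zero] at hw
    set d' := d - Finsupp.single w 1 with hd'
    have hdd : d' + Finsupp.single w 1 = d :=
      tsub_add_cancel_of_le (Finsupp.single_le_iff.mpr hw1)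
    have hWd' : W d' = t.card := by
      have h2 := W_add d' (Finsupp.single w 1)
      rw [hdd, W_single, hWd] at h2
      omega
    have hA : A d = A d' + A (Finsupp.single w 1) := by rw [← hdd, A_add]
    have h1 : ((-1 : ℝ)) ^ (A (Finsupp.single w 1)) * (-1) ^ (A (Finsupp.single w 1)) = 1 := by
      rw [← pow_add]
      exact Even.neg_one_pow ⟨_, rfl⟩
    have hre : (-1 : ℝ) ^ (A (Finsupp.single w 1)) * ((-1 : ℝ) ^ (A d) *
        (∏ e ∈ t, fac m n E qu qv e).coeff d')
        = (-1 : ℝ) ^ (A d') * (∏ e ∈ t, fac m n E qu qv e).coeff d' := by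
      rw [hA, pow_add]
      linear_combination ((-1 : ℝ) ^ (A d') * (∏ e ∈ t, fac m n E qu qv e).coeff d') * h1
    rw [hre]
    exact H d' hWd'
  · simp

lemma key_nonneg (E : Finset (Fin m × Fin n)) (qu : Fin m → ℝ) (qv : Fin n → ℝ) :
    ∀ t : Finset (Fin m × Fin n), ∀ d : (Fin m ⊕ Fin n) →₀ ℕ, W d = t.card →
      0 ≤ (-1 : ℝ) ^ (A d) * (∏ e ∈ t, fac m n E qu qv e).coeff d := by
  intro t
  induction t using Finset.induction_on with
  | empty =>
      intro d hd
      have h0 : d = 0 := W_zero_eq d (by simpa using hd)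
      subst h0
      simp [A]
  | @insert e t he IH =>
      intro d hd
      rw [Finset.card_insert_of_notMem he] at hd
      rw [coeff_insert E qu qv e t he d hd]
      exact add_nonneg
        (Finset.sum_nonneg fun j _ => T_nonneg_of E t qu qv d _ IH hd)
        (Finset.sum_nonneg fun i _ => T_nonneg_of E t qu qv d _ IH hd)

/-- head of an oriented edge -/
def headV (ori : Fin m × Fin n → Bool) (e : Fin m × Fin n) : Fin m ⊕ Fin n :=
  if ori e then Sum.inl e.1 else Sum.inr e.2

/-- indegree vector of the orientation restricted to `t` -/
noncomputable def D (ori : Fin m × Fin n → Bool) (t : Finset (Fin m × Fin n)) :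
    (Fin m ⊕ Fin n) →₀ ℕ :=
  ∑ e ∈ t, Finsupp.single (headV ori e) 1

lemma W_D (ori : Fin m × Fin n → Bool) (t : Finset (Fin m × Fin n)) :
    W (D ori t) = t.card := by
  classical
  induction t using Finset.induction_on with
  | empty => simp [D, W]
  | @insert e t he IH =>
      rw [D, Finset.sum_insert he, W_add, W_single, ← D, IH,
        Finset.card_insert_of_notMem he]
      omega

lemma key_pos (E : Finset (Fin m × Fin n)) (qu : Fin m → ℝ) (qv : Fin n → ℝ)
    (ori : Fin m × Fin n → Bool) :
    ∀ t : Finset (Fin m × Fin n), t ⊆ E →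
      0 < (-1 : ℝ) ^ (A (D ori t)) * (∏ e ∈ t, fac m n E qu qv e).coeff (D ori t) := by
  intro t
  induction t using Finset.induction_on with
  | empty =>
      intro _
      simp [D, A]
  | @insert e t he IH =>
      intro hsub
      have heE : e ∈ E := hsub (Finset.mem_insert_self e t)
      have htE : t ⊆ E := fun x hx => hsub (Finset.mem_insert_of_mem hx)
      set d := D ori (insert e t) with hdDef
      have hDins : d = Finsupp.single (headV ori e) 1 + D ori t := by
        rw [hdDef, D, Finset.sum_insert he]; rfl
      have hWd : W d = t.card + 1 := by
        rw [hDins, W_add, W_single, W_D]; omega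
      rw [coeff_insert E qu qv e t he d hWd]
      -- the term corresponding to the head of `e` is strictly positive
      have hsupp : headV ori e ∈ d.support := by
        rw [Finsupp.mem_support_iff, hDins]
        simp [Finsupp.single_apply]
      have hsubD : d - Finsupp.single (headV ori e) 1 = D ori t := by
        rw [hDins]; exact add_tsub_cancel_left _ _
      have hApow : (-1 : ℝ) ^ (A (Finsupp.single (headV ori e) 1)) * (-1 : ℝ) ^ (A d)
          = (-1 : ℝ) ^ (A (D ori t)) := by
        rw [hDins, A_add, pow_add, ← mul_assoc, ← pow_add]
        rw [Even.neg_one_pow ⟨_, rfl⟩, one_mul]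
      have hThead : T E t qu qv d (headV ori e)
          = (-1 : ℝ) ^ (A (D ori t)) * (∏ e' ∈ t, fac m n E qu qv e').coeff (D ori t) := by
        unfold T
        rw [if_pos hsupp, hsubD, ← mul_assoc, hApow]
      have hTpos : 0 < T E t qu qv d (headV ori e) := by
        rw [hThead]; exact IH htE
      have hTn : ∀ w, 0 ≤ T E t qu qv d w :=
        fun w => T_nonneg_of E t qu qv d w (key_nonneg E qu qv t) hWd
      rcases hori : ori e with hfalse | htrue
      · -- ori e = false : head is `inr e.2`, in the first sum
        have hw : headV ori e = Sum.inr e.2 := by simp [headV, hori]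
        refine add_pos_of_pos_of_nonneg ?_ (Finset.sum_nonneg fun i _ => hTn _)
        refine Finset.sum_pos' (fun j _ => hTn _) ⟨e.2, ?_, ?_⟩
        · simp [heE]
        · rw [← hw]; exact hTpos
      · -- ori e = true : head is `inl e.1`, in the second sum
        have hw : headV ori e = Sum.inl e.1 := by simp [headV, hori]
        refine add_pos_of_nonneg_of_pos (Finset.sum_nonneg fun j _ => hTn _) ?_
        refine Finset.sum_pos' (fun i _ => hTn _) ⟨e.1, ?_, ?_⟩
        · simp [heE]
        · rw [← hw]; exact hTpos

lemma D_apply (ori : Fin m × Fin n → Bool) (t : Finset (Fin m × Fin n)) (w : Fin m ⊕ Fin n) :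
    D ori t w = (t.filter fun e => headV ori e = w).card := by
  classical
  rw [D, Finsupp.finset_sum_apply, Finset.card_filter]
  exact Finset.sum_congr rfl fun e _ => by rw [Finsupp.single_apply]

end BipAux

/-- For a finite bipartite simple graph with classes `u₁, …, u_m` and `v₁, …, vₙ`,
edge set `E`, equipped with an orientation in which every vertex has indegree at
most `k` (`ori e = true` means the head of `e` is its endpoint in the first class),
and any `q`, the polynomial `P = ∏_{uᵢvⱼ ∈ E} (q(uᵢ) + S(uᵢ) − q(vⱼ) − S(vⱼ))` has
total degree equal to the number of edges, and `P` has a monomial with nonzero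
coefficient in which every variable occurs with exponent at most `k`. -/
theorem bipartite_polynomial_monomial
    (m n k : ℕ) (E : Finset (Fin m × Fin n)) (qu : Fin m → ℝ) (qv : Fin n → ℝ)
    (ori : Fin m × Fin n → Bool)
    (hU : ∀ i : Fin m, (E.filter fun e => e.1 = i ∧ ori e = true).card ≤ k)
    (hV : ∀ j : Fin n, (E.filter fun e => e.2 = j ∧ ori e = false).card ≤ k) :
    (bipPoly m n E qu qv).totalDegree = E.card ∧
    ∃ d : (Fin m ⊕ Fin n) →₀ ℕ, (bipPoly m n E qu qv).coeff d ≠ 0 ∧ ∀ w, d w ≤ k := by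
  classical
  have hP : bipPoly m n E qu qv = ∏ e ∈ E, BipAux.fac m n E qu qv e := rfl
  set d := BipAux.D ori E with hd
  have hpos := BipAux.key_pos E qu qv ori E subset_rfl
  have hne : (bipPoly m n E qu qv).coeff d ≠ 0 := by
    intro h
    rw [hP, hd] at h
    rw [h, mul_zero] at hpos
    exact lt_irrefl 0 hpos
  have hdk : ∀ w, d w ≤ k := by
    intro w
    rw [hd, BipAux.D_apply]
    match w with
    | Sum.inl i =>
        refine le_trans (le_of_eq ?_) (hU i)
        congr 1
        apply Finset.filter_congr
        intro e _
        by_cases hb : ori e <;> simp [BipAux.headV, hb]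
    | Sum.inr j =>
        refine le_trans (le_of_eq ?_) (hV j)
        congr 1
        apply Finset.filter_congr
        intro e _
        by_cases hb : ori e <;> simp [BipAux.headV, hb]
  refine ⟨le_antisymm (hP ▸ BipAux.totalDegree_prod E E qu qv) ?_, d, hne, hdk⟩
  have hmem : d ∈ (bipPoly m n E qu qv).support := MvPolynomial.mem_support_iff.mpr hne
  have hle := MvPolynomial.le_totalDegree hmem
  have hsum : (d.sum fun _ e => e) = E.card := by
    rw [Finsupp.sum, ← BipAux.W_eq, hd, BipAux.W_D]
  rwa [hsum] at hle
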